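/- If a non-increasing probability distribution P = (p_1,...,p_n) maximizes the average length L(P) = sum_{i=1}^{n-1} i·p_i + (n-1)p_n among all non-increasing distributions satisfying the AUH constraints, then p_i ≤ q_i for all i = 1,...,n-2, where q_i = sum_{j>i} p_j. -/
import Mathlib


open Finset

/-- A non-increasing probability distribution on symbols `1,…,n` satisfying the
anti-uniform Huffman (AUH) constraints `p i ≥ q (i+1) = ∑_{j > i+1} p j`. -/
def IsAUH (n : ℕ) (p : ℕ → ℝ) : Prop :=
  (∀ i ∈ Finset.Icc 1 n, 0 ≤ p i) ∧
  (∀ i j, 1 ≤ i → i ≤ j → j ≤ n → p j ≤ p i) ∧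
  (∑ i ∈ Finset.Icc 1 n, p i = 1) ∧
  (∀ i, 1 ≤ i → i ≤ n - 2 → ∑ j ∈ Finset.Icc (i + 2) n, p j ≤ p i)

/-- Average length of the anti-uniform code on `n` symbols. -/
noncomputable def avgLen (n : ℕ) (p : ℕ → ℝ) : ℝ :=
  ∑ i ∈ Finset.Icc 1 (n - 1), (i : ℝ) * p i + ((n : ℝ) - 1) * p n

/-- If an AUH distribution maximizes the average length, then each leaf probability is
at most the probability of the intermediate node at the same level:
`p i ≤ q i = ∑_{j > i} p j` for `i = 1,…,n-2`. -/
theorem maxAvgLen_le_node (n : ℕ) (hn : 2 ≤ n) (p : ℕ → ℝ) (hp : IsAUH n p)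
    (hmax : ∀ p' : ℕ → ℝ, IsAUH n p' → avgLen n p' ≤ avgLen n p) :
    ∀ i, 1 ≤ i → i ≤ n - 2 → p i ≤ ∑ j ∈ Finset.Icc (i + 1) n, p j := by
  intro i hi1 hi2
  by_contra hcon
  push_neg at hcon
  obtain ⟨hnn, hmono, hsum, hauh⟩ := hp
  have hn3 : 3 ≤ n := by omega
  set q : ℝ := ∑ j ∈ Finset.Icc (i + 1) n, p j with hq
  set q' : ℝ := ∑ j ∈ Finset.Icc (i + 2) n, p j with hq'
  have hsplit : q = p (i + 1) + q' := by
    rw [hq, hq']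
    have h1 : Finset.Icc (i + 1) n = insert (i + 1) (Finset.Icc (i + 2) n) := by
      ext x; simp only [Finset.mem_Icc, Finset.mem_insert]; omega
    rw [h1, Finset.sum_insert (by simp [Finset.mem_Icc])]
  have hq'nn : 0 ≤ q' := Finset.sum_nonneg fun j hj => by
    refine hnn j ?_; simp only [Finset.mem_Icc] at hj ⊢; omega
  have hpi1nn : 0 ≤ p (i + 1) := hnn _ (by simp only [Finset.mem_Icc]; omega)
  have hqnn : 0 ≤ q := by linarith
  set ε : ℝ := (p i - q) / 2 with hε
  have hεpos : 0 < ε := by simp only [hε]; linarith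
  set p' : ℕ → ℝ := fun j => p j + (if j = i then -ε else 0) + (if j = i + 1 then ε else 0)
    with hp'
  have hne : i ≠ i + 1 := by omega
  have hvi : p' i = p i - ε := by simp [hp', hne]; ring
  have hvi1 : p' (i + 1) = p (i + 1) + ε := by simp [hp', hne.symm]
  have hvo : ∀ j, j ≠ i → j ≠ i + 1 → p' j = p j := by
    intro j h1 h2; simp [hp', h1, h2]
  have hS : ∀ s : Finset ℕ, ∑ j ∈ s, p' j
      = ∑ j ∈ s, p j + (if i ∈ s then -ε else 0) + (if i + 1 ∈ s then ε else 0) := by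
    intro s
    simp only [hp', Finset.sum_add_distrib, Finset.sum_ite_eq']
  -- p b ≤ q for i+1 ≤ b ≤ n
  have hbq : ∀ b, i + 1 ≤ b → b ≤ n → p b ≤ q := by
    intro b h1 h2
    refine Finset.single_le_sum (f := p) (fun j hj => hnn j ?_) (Finset.mem_Icc.2 ⟨h1, h2⟩)
    simp only [Finset.mem_Icc] at hj ⊢; omega
  have hpi1q : p (i + 1) ≤ q := by linarith
  have key : IsAUH n p' := by
    refine ⟨?_, ?_, ?_, ?_⟩
    · intro j hj
      rcases eq_or_ne j i with rfl | h1
      · rw [hvi]; simp only [hε]; linarith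
      rcases eq_or_ne j (i + 1) with rfl | h2
      · rw [hvi1]; linarith
      · rw [hvo j h1 h2]; exact hnn j hj
    · intro a b ha hab hbn
      have hpba : p b ≤ p a := hmono a b ha hab hbn
      rcases eq_or_ne a i with rfl | ha1
      · rw [hvi]
        rcases eq_or_ne b a with rfl | hb1
        · rw [hvi]
        rcases eq_or_ne b (a + 1) with rfl | hb2
        · rw [hvi1]; simp only [hε]; linarith
        · rw [hvo b hb1 hb2]
          have : p b ≤ q := hbq b (by omega) hbn
          simp only [hε]; linarith
      rcases eq_or_ne a (i + 1) with rfl | ha2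
      · rcases eq_or_ne b (i + 1) with rfl | hb2
        · exact le_refl _
        · have hb1 : b ≠ i := by omega
          rw [hvo b hb1 hb2, hvi1]; linarith
      · -- a ∉ {i, i+1}
        rw [hvo a ha1 ha2]
        rcases eq_or_ne b i with rfl | hb1
        · rw [hvi]; linarith
        rcases eq_or_ne b (i + 1) with rfl | hb2
        · rw [hvi1]
          have hai : a ≤ i := by omega
          have : p i ≤ p a := hmono a i ha hai (by omega)
          simp only [hε]; linarith
        · rw [hvo b hb1 hb2]; exact hpba
    · rw [hS, hsum]
      have h1 : i ∈ Finset.Icc 1 n := by simp only [Finset.mem_Icc]; omega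
      have h2 : i + 1 ∈ Finset.Icc 1 n := by simp only [Finset.mem_Icc]; omega
      rw [if_pos h1, if_pos h2]; ring
    · intro k hk1 hk2
      rw [hS]
      have hk' : ∑ j ∈ Finset.Icc (k + 2) n, p j ≤ p k := hauh k hk1 hk2
      rcases lt_trichotomy k i with hki | rfl | hik
      · -- k < i
        rcases eq_or_ne (k + 1) i with hk1i | hk1i
        · -- k = i - 1 : i ∉ Icc (k+2) n, i+1 ∈
          have e1 : i ∉ Finset.Icc (k + 2) n := by simp only [Finset.mem_Icc]; omega
          have e2 : i + 1 ∈ Finset.Icc (k + 2) n := by simp only [Finset.mem_Icc]; omega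
          rw [if_neg e1, if_pos e2, hvo k (by omega) (by omega)]
          have : Finset.Icc (k + 2) n = Finset.Icc (i + 1) n := by rw [← hk1i]
          rw [this, ← hq]
          have hpik : p i ≤ p k := hmono k i hk1 (by omega) (by omega)
          simp only [hε]; linarith
        · -- k + 2 ≤ i : both in
          have e1 : i ∈ Finset.Icc (k + 2) n := by simp only [Finset.mem_Icc]; omega
          have e2 : i + 1 ∈ Finset.Icc (k + 2) n := by simp only [Finset.mem_Icc]; omega
          rw [if_pos e1, if_pos e2, hvo k (by omega) (by omega)]
          linarith
      · -- k = i : neither in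
        have e1 : k ∉ Finset.Icc (k + 2) n := by simp only [Finset.mem_Icc]; omega
        have e2 : k + 1 ∉ Finset.Icc (k + 2) n := by simp only [Finset.mem_Icc]; omega
        rw [if_neg e1, if_neg e2, hvi, ← hq']
        simp only [hε]; linarith
      · -- k > i : neither in
        have e1 : i ∉ Finset.Icc (k + 2) n := by simp only [Finset.mem_Icc]; omega
        have e2 : i + 1 ∉ Finset.Icc (k + 2) n := by simp only [Finset.mem_Icc]; omega
        rw [if_neg e1, if_neg e2]
        rcases eq_or_ne k (i + 1) with rfl | hki1
        · rw [hvi1]; linarith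
        · rw [hvo k (by omega) hki1]; linarith
  have hle := hmax p' key
  have havg : avgLen n p' = avgLen n p + ε := by
    unfold avgLen
    have hpn : p' n = p n := hvo n (by omega) (by omega)
    rw [hpn]
    have h1 : i ∈ Finset.Icc 1 (n - 1) := by simp only [Finset.mem_Icc]; omega
    have h2 : i + 1 ∈ Finset.Icc 1 (n - 1) := by simp only [Finset.mem_Icc]; omega
    have : ∑ j ∈ Finset.Icc 1 (n - 1), (j : ℝ) * p' j
        = ∑ j ∈ Finset.Icc 1 (n - 1), (j : ℝ) * p j + (i : ℝ) * (-ε) + ((i : ℝ) + 1) * ε := by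
      simp only [hp', mul_add, Finset.sum_add_distrib, mul_ite, mul_zero]
      rw [Finset.sum_ite_eq' _ i (fun j => (j : ℝ) * (-ε)),
        Finset.sum_ite_eq' _ (i + 1) (fun j => (j : ℝ) * ε),
        if_pos h1, if_pos h2]
      push_cast; ring
    rw [this]; ring
  linarith
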